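/- Let C be a monoidal category with coequalizers preserved by the tensor product in each variable, let R be a quasi-unital algebra object in C, and let M be a left R-module object. If the augmented simplicial bar object ⋯ ⇛ R ⊗ R ⊗ M ⇉ R ⊗ M → M admits an extra degeneracy (contracting homotopy in the simplicial sense), then the canonical map R ⊗_R M → M is an isomorphism, i.e., M is a smooth R-module. -/
import Mathlib


open CategoryTheory CategoryTheory.Limits MonoidalCategory

/-- In a monoidal category with coequalizers preserved by the tensor product in each
variable, if `R` is a quasi-unital algebra object and `M` a left `R`-module object
whose augmented bar object admits an extra degeneracy (contracting homotopy), then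
the canonical map `R ⊗_R M → M` is an isomorphism, i.e. `M` is smooth. -/
theorem smooth_of_extra_degeneracy
    {C : Type*} [Category C] [MonoidalCategory C] [HasCoequalizers C]
    [∀ X : C, PreservesColimitsOfShape WalkingParallelPair (tensorLeft X)]
    [∀ X : C, PreservesColimitsOfShape WalkingParallelPair (tensorRight X)]
    (R M : C) (μ : R ⊗ R ⟶ R) (act : R ⊗ M ⟶ M)
    -- associativity of multiplication and of the action
    (hμ : (α_ R R R).hom ≫ (R ◁ μ) ≫ μ = (μ ▷ R) ≫ μ)
    (hact : (α_ R R M).hom ≫ (R ◁ act) ≫ act = (μ ▷ M) ≫ act)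
    -- `R` is quasi-unital: the canonical map `R ⊗_R R → R` is an isomorphism
    (hQU : ∃ (w : ((α_ R R R).inv ≫ (μ ▷ R)) ≫ μ = (R ◁ μ) ≫ μ),
      IsIso (coequalizer.desc μ w))
    -- extra degeneracy of the augmented bar object, in low simplicial degrees
    (s : M ⟶ R ⊗ M) (t : R ⊗ M ⟶ R ⊗ (R ⊗ M))
    (hs : s ≫ act = 𝟙 M)
    (ht₀ : t ≫ ((α_ R R M).inv ≫ (μ ▷ M)) = 𝟙 (R ⊗ M))
    (ht₁ : t ≫ (R ◁ act) = act ≫ s) :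
    ∀ (w : ((α_ R R M).inv ≫ (μ ▷ M)) ≫ act = (R ◁ act) ≫ act)
      (h : coequalizer ((α_ R R M).inv ≫ (μ ▷ M)) (R ◁ act) ⟶ M),
      coequalizer.π _ _ ≫ h = act → IsIso h := by
  intro w h hh
  refine ⟨⟨s ≫ coequalizer.π _ _, ?_, ?_⟩⟩
  · apply coequalizer.hom_ext
    rw [Category.comp_id, reassoc_of% hh, ← reassoc_of% ht₁, ← coequalizer.condition,
      Category.assoc, reassoc_of% ht₀]
  · rw [Category.assoc, hh, hs]
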